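/- Let T = (t_{i−j})_{i,j=1}^n be a real positive definite Toeplitz matrix such that (T^{-1})_{k,1} = 0 for all k ∈ {3,...,n−1}. Write the first column of T^{-1} as (a, c, 0, ..., 0, d)^T. Then T^{-1} is the symmetric pentadiagonal-plus-corners matrix with diagonal entries (a, b, b, ..., b, a), entries c at distance 1 from the diagonal, d in the corners (1,n),(n,1), zeros elsewhere, where b = (a² + c² − d²)/a. -/

import Mathlib

open Matrix

set_option maxHeartbeats 3000000

private def frev {m : ℕ} (l : Fin (m+1)) : Fin (m+1) := ⟨m - (l:ℕ), by omega⟩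

private lemma frev_invol {m : ℕ} (l : Fin (m+1)) : frev (frev l) = l := by
  ext; simp [frev]; omega

private lemma sumS {m : ℕ} (T B : Matrix (Fin (m+1)) (Fin (m+1)) ℝ)
    (hBT : B * T = 1)
    (hToep : ∀ i j i' j' : Fin (m+1), (i : ℤ) - (j : ℤ) = (i' : ℤ) - (j' : ℤ) → T i j = T i' j')
    (hBsymm : ∀ i j, B i j = B j i) (k : Fin (m+1)) :
    (∑ l : Fin (m+1), T k l * B (frev l) ⟨0, by omega⟩)
      = if (k:ℕ) = m then 1 else 0 := by
  have hrevbij : Function.Bijective (frev (m := m)) :=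
    Function.Involutive.bijective frev_invol
  have step1 : ∀ l, T k l * B (frev l) ⟨0, by omega⟩
      = B ⟨0, by omega⟩ (frev l) * T (frev l) (frev k) := by
    intro l
    have ht : T k l = T (frev l) (frev k) := by
      apply hToep; simp only [frev]; omega
    rw [ht, hBsymm]; ring
  calc (∑ l, T k l * B (frev l) ⟨0, by omega⟩)
      = ∑ l, B ⟨0, by omega⟩ (frev l) * T (frev l) (frev k) :=
        Finset.sum_congr rfl fun l _ => step1 l
    _ = ∑ l, B ⟨0, by omega⟩ l * T l (frev k) :=
        Fintype.sum_bijective frev hrevbij _ _ (fun l => rfl)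
    _ = (B * T) ⟨0, by omega⟩ (frev k) := rfl
    _ = if (k:ℕ) = m then 1 else 0 := by
        rw [hBT, Matrix.one_apply]
        congr 1
        simp only [eq_iff_iff]
        constructor
        · intro h; have := congrArg Fin.val h; simp [frev] at this; omega
        · intro h; ext; simp [frev]; omega

private lemma persym {m : ℕ} (T B : Matrix (Fin (m+1)) (Fin (m+1)) ℝ)
    (hTB : T * B = 1) (hBT : B * T = 1)
    (hToep : ∀ i j i' j' : Fin (m+1), (i : ℤ) - (j : ℤ) = (i' : ℤ) - (j' : ℤ) → T i j = T i' j')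
    (hBsymm : ∀ i j, B i j = B j i) :
    ∀ i j : Fin (m+1), B i j = B ⟨m-(i:ℕ), by omega⟩ ⟨m-(j:ℕ), by omega⟩ := by
  have hrevbij : Function.Bijective (frev (m := m)) :=
    Function.Involutive.bijective frev_invol
  set B' : Matrix (Fin (m+1)) (Fin (m+1)) ℝ := fun i j => B (frev i) (frev j) with hB'
  have key : T * B' = 1 := by
    ext i j
    have hstep : ∀ k, T i k * B' k j = B (frev j) (frev k) * T (frev k) (frev i) := by
      intro k
      have ht : T i k = T (frev k) (frev i) := by
        apply hToep; simp only [frev]; omega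
      rw [ht]
      have : B' k j = B (frev j) (frev k) := by rw [hB']; exact hBsymm _ _
      rw [this]; ring
    calc (T * B') i j = ∑ k, T i k * B' k j := rfl
      _ = ∑ k, B (frev j) (frev k) * T (frev k) (frev i) :=
          Finset.sum_congr rfl fun k _ => hstep k
      _ = ∑ k, B (frev j) k * T k (frev i) :=
          Fintype.sum_bijective frev hrevbij _ _ (fun k => rfl)
      _ = (B * T) (frev j) (frev i) := rfl
      _ = (1 : Matrix (Fin (m+1)) (Fin (m+1)) ℝ) (frev j) (frev i) := by rw [hBT]
      _ = (1 : Matrix (Fin (m+1)) (Fin (m+1)) ℝ) i j := by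
          simp only [Matrix.one_apply]
          congr 1
          simp only [eq_iff_iff]
          constructor
          · intro h
            have := congrArg Fin.val h; simp only [frev] at this
            ext; omega
          · intro h; rw [h]
  have hBB : B' = B := by
    calc B' = 1 * B' := by rw [Matrix.one_mul]
      _ = (B * T) * B' := by rw [hBT]
      _ = B * (T * B') := by rw [Matrix.mul_assoc]
      _ = B := by rw [key, Matrix.mul_one]
  intro i j
  conv_lhs => rw [← hBB]
  rfl

private def vv {m : ℕ} (B : Matrix (Fin (m+1)) (Fin (m+1)) ℝ) (jm : Fin (m+1)) :
    Fin (m+1) → ℝ :=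
  fun l => if h : 0 < (l:ℕ) then
    B ⟨0, by omega⟩ ⟨0, by omega⟩ * B ⟨(l:ℕ)-1, by omega⟩ jm
      - B ⟨m, by omega⟩ jm * B (frev ⟨(l:ℕ)-1, by omega⟩) ⟨0, by omega⟩
  else 0

private lemma stepA {m : ℕ} (T B : Matrix (Fin (m+1)) (Fin (m+1)) ℝ)
    (hTB : T * B = 1) (hBT : B * T = 1)
    (hToep : ∀ i j i' j' : Fin (m+1), (i : ℤ) - (j : ℤ) = (i' : ℤ) - (j' : ℤ) → T i j = T i' j')
    (hBsymm : ∀ i j, B i j = B j i) (j : Fin (m+1)) (hj : 0 < (j:ℕ))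
    (k : Fin (m+1)) (hk : 0 < (k:ℕ)) :
    (T *ᵥ vv B ⟨(j:ℕ)-1, by omega⟩) k
      = B ⟨0, by omega⟩ ⟨0, by omega⟩ * (if k = j then 1 else 0) := by
  have hkm : (k:ℕ) - 1 < m + 1 := by omega
  set a : ℝ := B ⟨0, by omega⟩ ⟨0, by omega⟩ with ha
  set jm : Fin (m+1) := ⟨(j:ℕ)-1, by omega⟩ with hjm
  set km : Fin (m+1) := ⟨(k:ℕ)-1, hkm⟩ with hkmdef
  set md : ℝ := B ⟨m, by omega⟩ jm with hmd
  have h1 : (T *ᵥ vv B jm) k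
      = ∑ l : Fin m, T km l.castSucc * (a * B l.castSucc jm - md * B (frev l.castSucc) ⟨0, by omega⟩) := by
    rw [Matrix.mulVec, dotProduct, Fin.sum_univ_succ]
    have hv0 : vv B jm 0 = 0 := by simp [vv]
    rw [hv0, mul_zero, zero_add]
    refine Finset.sum_congr rfl fun l _ => ?_
    have hvs : vv B jm l.succ
        = a * B l.castSucc jm - md * B (frev l.castSucc) ⟨0, by omega⟩ := by
      have hpos : 0 < (l.succ : ℕ) := by simp [Fin.val_succ]
      rw [vv, dif_pos hpos]
      have e1 : (⟨(l.succ:ℕ)-1, by omega⟩ : Fin (m+1)) = l.castSucc := by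
        ext; simp [Fin.val_succ]
      rw [e1]
    have hts : T k l.succ = T km l.castSucc := by
      apply hToep; simp only [Fin.val_succ, Fin.coe_castSucc, hkmdef]; omega
    rw [hvs, hts]
  rw [h1]
  have h2 : ∑ l : Fin m, T km l.castSucc * (a * B l.castSucc jm - md * B (frev l.castSucc) ⟨0, by omega⟩)
      = (∑ l : Fin (m+1), T km l * (a * B l jm - md * B (frev l) ⟨0, by omega⟩))
        - T km ⟨m, by omega⟩ * (a * B ⟨m, by omega⟩ jm - md * B (frev ⟨m, by omega⟩) ⟨0, by omega⟩) := by
    rw [Fin.sum_univ_castSucc (f := fun l => T km l * (a * B l jm - md * B (frev l) ⟨0, by omega⟩))]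
    have : (Fin.last m) = (⟨m, by omega⟩ : Fin (m+1)) := rfl
    rw [this]; ring
  rw [h2]
  have h3 : B (frev ⟨m, by omega⟩) ⟨0, by omega⟩ = a := by
    rw [ha]; congr 1; ext; simp [frev]
  have h4 : (∑ l : Fin (m+1), T km l * (a * B l jm - md * B (frev l) ⟨0, by omega⟩))
      = a * ((T*B) km jm) - md * (if ((k:ℕ)-1) = m then 1 else 0) := by
    simp only [mul_sub, Finset.sum_sub_distrib]
    congr 1
    · rw [Matrix.mul_apply, Finset.mul_sum]
      exact Finset.sum_congr rfl fun l _ => by ring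
    · have hs := sumS T B hBT hToep hBsymm km
      calc ∑ x : Fin (m+1), T km x * (md * B (frev x) ⟨0, by omega⟩)
          = md * ∑ l : Fin (m+1), T km l * B (frev l) ⟨0, by omega⟩ := by
            rw [Finset.mul_sum]; exact Finset.sum_congr rfl fun l _ => by ring
        _ = md * (if ((k:ℕ)-1) = m then 1 else 0) := by rw [hs]
  rw [h4]
  have h5 : (T*B) km jm = if k = j then 1 else 0 := by
    rw [hTB, Matrix.one_apply]
    congr 1
    simp only [eq_iff_iff, hkmdef, hjm]
    constructor
    · intro h; have := congrArg Fin.val h; simp at this; ext; omega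
    · intro h; have := congrArg Fin.val h; ext; simp; omega
  have h6 : (if ((k:ℕ)-1) = m then (1:ℝ) else 0) = 0 := if_neg (by omega)
  rw [h5, h6, h3]
  have hBlastjm : B ⟨m, by omega⟩ jm = md := rfl
  rw [hBlastjm]
  ring

private lemma recurrence {m : ℕ} (T B : Matrix (Fin (m+1)) (Fin (m+1)) ℝ)
    (hTB : T * B = 1) (hBT : B * T = 1)
    (hToep : ∀ i j i' j' : Fin (m+1), (i : ℤ) - (j : ℤ) = (i' : ℤ) - (j' : ℤ) → T i j = T i' j')
    (hBsymm : ∀ i j, B i j = B j i)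
    (hpersym : ∀ i j : Fin (m+1), B i j = B ⟨m-(i:ℕ), by omega⟩ ⟨m-(j:ℕ), by omega⟩)
    (ha : B ⟨0, by omega⟩ ⟨0, by omega⟩ ≠ 0)
    (i j : Fin (m+1)) (hi : 0 < (i:ℕ)) (hj : 0 < (j:ℕ)) :
    B ⟨0, by omega⟩ ⟨0, by omega⟩ * B i j
      = B ⟨0, by omega⟩ ⟨0, by omega⟩ * B ⟨(i:ℕ)-1, by omega⟩ ⟨(j:ℕ)-1, by omega⟩
        + B i ⟨0, by omega⟩ * B j ⟨0, by omega⟩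
        - B ⟨m+1-(i:ℕ), by omega⟩ ⟨0, by omega⟩ * B ⟨m+1-(j:ℕ), by omega⟩ ⟨0, by omega⟩ := by
  have hz : (0:ℕ) < m + 1 := by omega
  set z0 : Fin (m+1) := ⟨0, hz⟩ with hz0
  set aa : ℝ := B z0 z0 with haa
  have hjm : (j:ℕ) - 1 < m + 1 := by omega
  set jm : Fin (m+1) := ⟨(j:ℕ)-1, hjm⟩ with hjmdef
  set γ : ℝ := (T *ᵥ vv B jm) z0 with hγ
  have stepB : T *ᵥ vv B jm
      = fun k => aa * (if k = j then 1 else 0) + γ * (if k = z0 then 1 else 0) := by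
    funext k
    by_cases hk : 0 < (k:ℕ)
    · have h0 : (if k = z0 then (1:ℝ) else 0) = 0 := by
        rw [if_neg]; intro h; rw [h] at hk; simp [hz0] at hk
      rw [h0, mul_zero, add_zero]
      exact stepA T B hTB hBT hToep hBsymm j hj k hk
    · have hk0 : k = z0 := by ext; show (k:ℕ) = 0; omega
      subst hk0
      have h1 : (if z0 = j then (1:ℝ) else 0) = 0 := by
        rw [if_neg]; intro h; rw [← h] at hj; simp [hz0] at hj
      rw [h1, if_pos rfl, mul_zero, zero_add, mul_one]
  have stepC : vv B jm = fun l => aa * B l j + γ * B l z0 := by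
    have h1 : vv B jm = (B * T) *ᵥ vv B jm := by rw [hBT, Matrix.one_mulVec]
    rw [← Matrix.mulVec_mulVec, stepB] at h1
    rw [h1]
    funext l
    rw [Matrix.mulVec, dotProduct]
    simp only [mul_add, mul_ite, mul_one, mul_zero, Finset.sum_add_distrib,
      Finset.sum_ite_eq', Finset.mem_univ, if_pos]
    ring
  have hγval : γ = - B j z0 := by
    have h0 : vv B jm z0 = 0 := by simp [vv, hz0]
    rw [stepC] at h0
    simp only at h0
    have hBzj : B z0 j = B j z0 := hBsymm _ _
    rw [hBzj] at h0
    rw [← haa] at h0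
    have h2 : aa * (B j z0 + γ) = 0 := by linear_combination h0
    rcases mul_eq_zero.mp h2 with h | h
    · exact absurd h ha
    · linarith
  have stepE := congrFun stepC i
  rw [vv] at stepE
  rw [dif_pos hi] at stepE
  have e1 : B (frev ⟨(i:ℕ)-1, by omega⟩) z0 = B ⟨m+1-(i:ℕ), by omega⟩ z0 := by
    congr 1; ext; simp [frev]; omega
  have e2 : B ⟨m, by omega⟩ jm = B ⟨m+1-(j:ℕ), by omega⟩ z0 := by
    rw [hpersym ⟨m, by omega⟩ jm, hBsymm]
    congr 1
    · ext; simp [hjmdef]; omega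
    · ext; simp [hz0]
  rw [e1, e2, hγval] at stepE
  have e4 : B ⟨(i:ℕ)-1, by omega⟩ jm = B ⟨(i:ℕ)-1, by omega⟩ ⟨(j:ℕ)-1, by omega⟩ := rfl
  rw [e4] at stepE
  linarith [stepE]



private noncomputable def uf (m : ℕ) (a c d : ℝ) (x : ℕ) : ℝ :=
  if x = 0 then a else if x = 1 then c else if x = m then d else 0

private noncomputable def Gf (m : ℕ) (a c d : ℝ) (x y : ℕ) : ℝ :=
  if x = y then (if x = 0 ∨ x = m then a else (a^2+c^2-d^2)/a)
  else if x+1 = y ∨ y+1 = x then c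
  else if (x = 0 ∧ y = m) ∨ (x = m ∧ y = 0) then d else 0

private lemma Gbase0 {m : ℕ} (hm : 3 ≤ m) (a c d : ℝ) (j : ℕ) (hj : j ≤ m) :
    uf m a c d j = Gf m a c d 0 j := by
  unfold uf Gf; split_ifs <;> first | rfl | omega | (simp_all; try omega) | (simp_all; try ring1)

private lemma Gbase0' {m : ℕ} (hm : 3 ≤ m) (a c d : ℝ) (i : ℕ) (hi : i ≤ m) :
    uf m a c d i = Gf m a c d i 0 := by
  unfold uf Gf; split_ifs <;> first | rfl | omega | (simp_all; try omega) | (simp_all; try ring1)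

private lemma Grec {m : ℕ} (hm : 3 ≤ m) (a c d : ℝ) (ha : a ≠ 0) (i j : ℕ)
    (hi : 1 ≤ i) (hj : 1 ≤ j) (hi2 : i ≤ m) (hj2 : j ≤ m) :
    a * Gf m a c d i j
      = a * Gf m a c d (i-1) (j-1) + uf m a c d i * uf m a c d j
        - uf m a c d (m+1-i) * uf m a c d (m+1-j) := by
  have hui : uf m a c d i = if i = 1 then c else if i = m then d else 0 := by
    unfold uf; split_ifs <;> first | rfl | omega
  have huj : uf m a c d j = if j = 1 then c else if j = m then d else 0 := by
    unfold uf; split_ifs <;> first | rfl | omega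
  have huni : uf m a c d (m+1-i) = if i = m then c else if i = 1 then d else 0 := by
    unfold uf; split_ifs <;> first | rfl | omega
  have hunj : uf m a c d (m+1-j) = if j = m then c else if j = 1 then d else 0 := by
    unfold uf; split_ifs <;> first | rfl | omega
  have hab : a * ((a^2+c^2-d^2)/a) = a^2+c^2-d^2 := by field_simp
  rw [hui, huj, huni, hunj]
  unfold Gf
  split_ifs <;>
    first
    | omega
    | ring1
    | linear_combination hab
    | linear_combination -hab
    | (simp_all; try omega)
    | (simp_all; omega)

theorem stmt15 {n : ℕ} (hn : 4 ≤ n) (T : Matrix (Fin n) (Fin n) ℝ)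
    (hT : T.PosDef)
    (hToep : ∀ i j i' j' : Fin n, (i : ℤ) - (j : ℤ) = (i' : ℤ) - (j' : ℤ) → T i j = T i' j')
    (hzero : ∀ k : Fin n, 2 ≤ (k : ℕ) → (k : ℕ) ≤ n - 2 → T⁻¹ k ⟨0, by omega⟩ = 0)
    (a c d : ℝ)
    (ha : a = T⁻¹ ⟨0, by omega⟩ ⟨0, by omega⟩)
    (hc : c = T⁻¹ ⟨1, by omega⟩ ⟨0, by omega⟩)
    (hd : d = T⁻¹ ⟨n - 1, by omega⟩ ⟨0, by omega⟩) :
    ∀ i j : Fin n, T⁻¹ i j =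
      if i = j then (if (i : ℕ) = 0 ∨ (i : ℕ) = n - 1 then a else (a ^ 2 + c ^ 2 - d ^ 2) / a)
      else if (i : ℕ) + 1 = (j : ℕ) ∨ (j : ℕ) + 1 = (i : ℕ) then c
      else if ((i : ℕ) = 0 ∧ (j : ℕ) = n - 1) ∨ ((i : ℕ) = n - 1 ∧ (j : ℕ) = 0) then d
      else 0 := by
  obtain ⟨m, rfl⟩ : ∃ m, n = m + 1 := ⟨n - 1, by omega⟩
  have hm : 3 ≤ m := by omega
  have hdet : IsUnit T.det := isUnit_iff_ne_zero.2 hT.det_pos.ne'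
  have hTB : T * T⁻¹ = 1 := mul_nonsing_inv T hdet
  have hBT : T⁻¹ * T = 1 := nonsing_inv_mul T hdet
  have hBsymm : ∀ i j, T⁻¹ i j = T⁻¹ j i := by
    intro i j
    have := congrFun (congrFun (hT.inv).isHermitian j) i
    simpa [Matrix.conjTranspose_apply] using this
  have hpersym := persym T T⁻¹ hTB hBT hToep hBsymm
  have hapos : 0 < T⁻¹ ⟨0, by omega⟩ ⟨0, by omega⟩ := by
    have h := hT.inv.dotProduct_mulVec_pos (x := Pi.single ⟨0, by omega⟩ 1) (by
      intro h; have := congrFun h ⟨0, by omega⟩; simp at this)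
    simpa [dotProduct, mulVec, Pi.single_apply, Finset.sum_ite_eq, Finset.sum_ite_eq'] using h
  have ha' : T⁻¹ ⟨0, by omega⟩ ⟨0, by omega⟩ ≠ 0 := ne_of_gt hapos
  have haneq : a ≠ 0 := by rw [ha]; exact ha'
  have huval : ∀ k : Fin (m+1), T⁻¹ k ⟨0, by omega⟩ = uf m a c d (k:ℕ) := by
    intro k
    unfold uf
    by_cases h0 : (k:ℕ) = 0
    · rw [if_pos h0]
      have hk : k = ⟨0, by omega⟩ := by rw [Fin.eq_mk_iff_val_eq]; omega
      rw [hk]; exact ha.symm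
    rw [if_neg h0]
    by_cases h1 : (k:ℕ) = 1
    · rw [if_pos h1]
      have hk : k = ⟨1, by omega⟩ := by rw [Fin.eq_mk_iff_val_eq]; omega
      rw [hk]; exact hc.symm
    rw [if_neg h1]
    by_cases h2 : (k:ℕ) = m
    · rw [if_pos h2]
      have hk : k = ⟨m+1-1, by omega⟩ := by rw [Fin.eq_mk_iff_val_eq]; omega
      rw [hk]; exact hd.symm
    rw [if_neg h2]
    exact hzero k (by omega) (by have := k.isLt; omega)
  have key : ∀ N : ℕ, ∀ i j : Fin (m+1), (i:ℕ) ≤ N →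
      T⁻¹ i j = Gf m a c d (i:ℕ) (j:ℕ) := by
    intro N
    induction N with
    | zero =>
      intro i j hiN
      have hi0 : (i:ℕ) = 0 := by omega
      have hieq : i = ⟨0, by omega⟩ := by rw [Fin.eq_mk_iff_val_eq]; omega
      have hval : T⁻¹ i j = uf m a c d (j:ℕ) := by
        rw [hBsymm, hieq]; exact huval j
      rw [hval, hi0]
      exact Gbase0 hm a c d (j:ℕ) (by have := j.isLt; omega)
    | succ N IH =>
      intro i j hiN
      by_cases hi0 : (i:ℕ) = 0
      · have hieq : i = ⟨0, by omega⟩ := by rw [Fin.eq_mk_iff_val_eq]; omega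
        have hval : T⁻¹ i j = uf m a c d (j:ℕ) := by
          rw [hBsymm, hieq]; exact huval j
        rw [hval, hi0]
        exact Gbase0 hm a c d (j:ℕ) (by have := j.isLt; omega)
      by_cases hj0 : (j:ℕ) = 0
      · have hjeq : j = ⟨0, by omega⟩ := by rw [Fin.eq_mk_iff_val_eq]; omega
        have hval : T⁻¹ i j = uf m a c d (i:ℕ) := by
          rw [hjeq]; exact huval i
        rw [hval, hj0]
        exact Gbase0' hm a c d (i:ℕ) (by have := i.isLt; omega)
      · have hib := i.isLt
        have hjb := j.isLt
        have hrec := recurrence T T⁻¹ hTB hBT hToep hBsymm hpersym ha' i j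
          (by omega) (by omega)
        have hIH := IH ⟨(i:ℕ)-1, by omega⟩ ⟨(j:ℕ)-1, by omega⟩
          (by show (i:ℕ)-1 ≤ N; omega)
        refine mul_left_cancel₀ ha' ?_
        rw [hrec, hIH, huval i, huval j, huval ⟨m+1-(i:ℕ), by omega⟩,
          huval ⟨m+1-(j:ℕ), by omega⟩, ← ha]
        exact (Grec hm a c d haneq (i:ℕ) (j:ℕ) (by omega) (by omega)
          (by omega) (by omega)).symm
  intro i j
  rw [key (i:ℕ) i j le_rfl]
  unfold Gf
  simp only [Fin.ext_iff, Nat.add_sub_cancel]
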